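/- Let (μ_n) be the occupation measures μ_n(B) = (1/t_n)∫₀^{t_n} p_x(s,B) ds for a Markov transition function p_x satisfying the Chapman–Kolmogorov equation, with t_n → ∞. If a subsequence μ_{n_j} converges weakly to a probability measure μ₀, then for every bounded continuous f and every t > 0, ∫ P_t f dμ₀ = ∫ f dμ₀; i.e., μ₀ is an invariant measure. -/

import Mathlib

open MeasureTheory Filter

/-- A weak limit of occupation measures of a Feller Markov transition function is an
invariant measure: if `μ_n(B) = (1/t_n)∫₀^{t_n} p_x(s, B) ds` with `t_n → ∞` and a
subsequence `μ_{n_j}` converges weakly to a probability measure `μ₀`, then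
`∫ P_t f dμ₀ = ∫ f dμ₀` for every bounded continuous `f` and `t > 0`. -/
theorem stmt_13 {d : ℕ}
    (p : EuclideanSpace ℝ (Fin d) → ℝ → Measure (EuclideanSpace ℝ (Fin d)))
    (hprob : ∀ y t, IsProbabilityMeasure (p y t))
    -- Chapman–Kolmogorov equation, in integrated form
    (hCK : ∀ (f : EuclideanSpace ℝ (Fin d) → ℝ), Continuous f → (∃ Cf, ∀ y, |f y| ≤ Cf) →
      ∀ (y : EuclideanSpace ℝ (Fin d)) (t s : ℝ), 0 ≤ t → 0 ≤ s →
        ∫ z, f z ∂ p y (t + s) = ∫ w, (∫ z, f z ∂ p w s) ∂ p y t)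
    -- Feller property
    (hFeller : ∀ (f : EuclideanSpace ℝ (Fin d) → ℝ), Continuous f → (∃ Cf, ∀ y, |f y| ≤ Cf) →
      ∀ t : ℝ, Continuous fun y => ∫ z, f z ∂ p y t)
    (x : EuclideanSpace ℝ (Fin d))
    (tseq : ℕ → ℝ) (htpos : ∀ n, 0 < tseq n) (htlim : Tendsto tseq atTop atTop)
    (μn : ℕ → Measure (EuclideanSpace ℝ (Fin d)))
    (hμn : ∀ (n : ℕ) (f : EuclideanSpace ℝ (Fin d) → ℝ), Continuous f →
      (∃ Cf, ∀ y, |f y| ≤ Cf) →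
      ∫ y, f y ∂ μn n = (1 / tseq n) * ∫ s in (0:ℝ)..tseq n, ∫ z, f z ∂ p x s)
    (φ : ℕ → ℕ) (hφ : StrictMono φ)
    (μ₀ : Measure (EuclideanSpace ℝ (Fin d))) [IsProbabilityMeasure μ₀]
    (hweak : ∀ (f : EuclideanSpace ℝ (Fin d) → ℝ), Continuous f → (∃ Cf, ∀ y, |f y| ≤ Cf) →
      Tendsto (fun j => ∫ y, f y ∂ μn (φ j)) atTop (nhds (∫ y, f y ∂ μ₀))) :
    ∀ (f : EuclideanSpace ℝ (Fin d) → ℝ), Continuous f → (∃ Cf, ∀ y, |f y| ≤ Cf) →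
      ∀ t : ℝ, 0 < t →
        ∫ y, (∫ z, f z ∂ p y t) ∂ μ₀ = ∫ y, f y ∂ μ₀ := by
  intro f hf hb t ht
  obtain ⟨Cf, hCf⟩ := hb
  have hCf0 : 0 ≤ Cf := le_trans (abs_nonneg (f 0)) (hCf 0)
  -- F is the function u ↦ P_u f (x)
  set F : ℝ → ℝ := fun s => ∫ z, f z ∂ p x s with hF
  -- integrability of f against any p y s
  have hfint : ∀ (y : EuclideanSpace ℝ (Fin d)) (s : ℝ), Integrable f (p y s) := by
    intro y s
    haveI := hprob y s
    exact ⟨hf.aestronglyMeasurable,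
      HasFiniteIntegral.of_bounded (C := Cf)
        (Eventually.of_forall fun z => by simpa [Real.norm_eq_abs] using hCf z)⟩
  -- uniform bound on F
  have hFbd : ∀ s, |F s| ≤ Cf := by
    intro s
    haveI := hprob x s
    have h := norm_integral_le_of_norm_le_const (μ := p x s) (C := Cf)
      (Eventually.of_forall fun z => by simpa [Real.norm_eq_abs] using hCf z) (f := f)
    simpa [Real.norm_eq_abs, measure_univ] using h
  -- the constant 1 integrates to 1 against μn n
  have hone : ∀ n : ℕ, ∫ y, (1 : ℝ) ∂ μn n = 1 := by
    intro n
    have h := hμn n (fun _ => (1 : ℝ)) continuous_const ⟨1, fun y => by norm_num⟩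
    have h2 : ∀ s : ℝ, (∫ z, (1 : ℝ) ∂ p x s) = 1 := by
      intro s; haveI := hprob x s; simp
    simp only [h2] at h
    rw [h, intervalIntegral.integral_const, sub_zero, smul_eq_mul, mul_one]
    field_simp [(htpos n).ne']
  -- μn n is a probability measure
  have hμnfin : ∀ n : ℕ, IsFiniteMeasure (μn n) := by
    intro n
    have h := hone n
    rw [integral_const, smul_eq_mul, mul_one] at h
    refine ⟨?_⟩
    by_contra hcon
    push_neg at hcon
    rw [Measure.real, top_le_iff.mp hcon] at h
    simp at h
  -- KEY: F is interval integrable on [0, T] for every T ≥ 0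
  have key : ∀ T : ℝ, 0 ≤ T → IntervalIntegrable F volume 0 T := by
    intro T hT
    by_contra hni
    obtain ⟨n, hn⟩ : ∃ n, T ≤ tseq n := (htlim.eventually (eventually_ge_atTop T)).exists
    have hni' : ¬ IntervalIntegrable F volume 0 (tseq n) := by
      intro hI
      exact hni (hI.mono_set (Set.uIcc_subset_uIcc Set.left_mem_uIcc
        (by rw [Set.uIcc_of_le (htpos n).le]; exact ⟨hT, hn⟩)))
    -- consider h := f + (Cf + 1) ≥ 1
    set h : EuclideanSpace ℝ (Fin d) → ℝ := fun y => f y + (Cf + 1) with hh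
    have hhc : Continuous h := hf.add continuous_const
    have hhb : ∀ y, |h y| ≤ 2 * Cf + 1 := by
      intro y
      have := abs_le.mp (hCf y)
      rw [abs_le]; constructor <;> simp only [hh] <;> linarith
    have hFh : ∀ s : ℝ, (∫ z, h z ∂ p x s) = F s + (Cf + 1) := by
      intro s
      haveI := hprob x s
      simp only [hh]
      rw [integral_add (hfint x s) (integrable_const _), integral_const]
      simp [hF]
    have hniFh : ¬ IntervalIntegrable (fun s => ∫ z, h z ∂ p x s) volume 0 (tseq n) := by
      intro hI
      simp only [hFh] at hI
      have := hI.sub (intervalIntegrable_const (c := Cf + 1))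
      exact hni' (by simpa using this)
    have h0 : ∫ y, h y ∂ μn n = 0 := by
      rw [hμn n h hhc ⟨2 * Cf + 1, hhb⟩, intervalIntegral.integral_undef hniFh, mul_zero]
    haveI := hμnfin n
    have hint : Integrable h (μn n) :=
      ⟨hhc.aestronglyMeasurable,
        HasFiniteIntegral.of_bounded (C := 2 * Cf + 1)
          (Eventually.of_forall fun y => by simpa [Real.norm_eq_abs] using hhb y)⟩
    have hge : (1 : ℝ) ≤ ∫ y, h y ∂ μn n := by
      calc (1 : ℝ) = ∫ y, (1 : ℝ) ∂ μn n := (hone n).symm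
        _ ≤ ∫ y, h y ∂ μn n := by
            refine integral_mono (integrable_const 1) hint fun y => ?_
            have := (abs_le.mp (hCf y)).1
            simp only [hh]; linarith
    rw [h0] at hge; linarith
  -- g := P_t f
  set g : EuclideanSpace ℝ (Fin d) → ℝ := fun y => ∫ z, f z ∂ p y t with hg
  have hgc : Continuous g := hFeller f hf ⟨Cf, hCf⟩ t
  have hgb : ∀ y, |g y| ≤ Cf := by
    intro y
    haveI := hprob y t
    have h := norm_integral_le_of_norm_le_const (μ := p y t) (C := Cf)
      (Eventually.of_forall fun z => by simpa [Real.norm_eq_abs] using hCf z) (f := f)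
    simpa [Real.norm_eq_abs, measure_univ] using h
  -- the sequence of occupation times along the subsequence tends to ∞
  have hTlim : Tendsto (fun j => tseq (φ j)) atTop atTop := htlim.comp hφ.tendsto_atTop
  -- the identity for ∫ g dμ_{φ j}
  have hAj : ∀ j : ℕ, ∫ y, g y ∂ μn (φ j)
      = (1 / tseq (φ j)) * ∫ s in t..(tseq (φ j) + t), F s := by
    intro j
    rw [hμn (φ j) g hgc ⟨Cf, hgb⟩]
    congr 1
    have hcongr : Set.EqOn (fun s => ∫ z, g z ∂ p x s) (fun s => F (s + t))
        (Set.uIcc 0 (tseq (φ j))) := by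
      intro s hs
      rw [Set.uIcc_of_le (htpos (φ j)).le] at hs
      exact (hCK f hf ⟨Cf, hCf⟩ x s t hs.1 ht.le).symm
    rw [intervalIntegral.integral_congr hcongr,
      intervalIntegral.integral_comp_add_right F t, zero_add]
  -- difference bound and limit 0
  have hdiff : Tendsto (fun j => (∫ y, g y ∂ μn (φ j)) - ∫ y, f y ∂ μn (φ j))
      atTop (nhds 0) := by
    have hbound : ∀ j : ℕ,
        ‖(∫ y, g y ∂ μn (φ j)) - ∫ y, f y ∂ μn (φ j)‖ ≤ 2 * Cf * t / tseq (φ j) := by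
      intro j
      set T := tseq (φ j) with hT
      have hT0 : 0 < T := htpos (φ j)
      rw [hAj j, hμn (φ j) f hf ⟨Cf, hCf⟩]
      have hI1 : IntervalIntegrable F volume 0 (T + t) := key (T + t) (by linarith)
      have hIt : IntervalIntegrable F volume 0 t := key t ht.le
      have hIT : IntervalIntegrable F volume 0 T := key T hT0.le
      have e1 : (∫ s in t..(T + t), F s) = (∫ s in (0:ℝ)..(T + t), F s) - ∫ s in (0:ℝ)..t, F s :=
        (intervalIntegral.integral_interval_sub_left hI1 hIt).symm
      have e2 : (∫ s in (0:ℝ)..(T + t), F s) - (∫ s in (0:ℝ)..T, F s) = ∫ s in T..(T + t), F s :=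
        intervalIntegral.integral_interval_sub_left hI1 hIT
      have b1 : ‖∫ s in T..(T + t), F s‖ ≤ Cf * t := by
        have := intervalIntegral.norm_integral_le_of_norm_le_const
          (C := Cf) (f := F) (a := T) (b := T + t)
          (fun s _ => by simpa [Real.norm_eq_abs] using hFbd s)
        simpa [abs_of_nonneg ht.le] using this
      have b2 : ‖∫ s in (0:ℝ)..t, F s‖ ≤ Cf * t := by
        have := intervalIntegral.norm_integral_le_of_norm_le_const
          (C := Cf) (f := F) (a := (0:ℝ)) (b := t)
          (fun s _ => by simpa [Real.norm_eq_abs] using hFbd s)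
        simpa [abs_of_nonneg ht.le] using this
      have e3 : (1 / T) * (∫ s in t..(T + t), F s) - (1 / T) * (∫ s in (0:ℝ)..T, F s)
          = (1 / T) * ((∫ s in T..(T + t), F s) - ∫ s in (0:ℝ)..t, F s) := by
        rw [← mul_sub]; congr 1; rw [e1]; linarith [e2]
      rw [e3]
      rw [Real.norm_eq_abs, abs_mul, abs_of_nonneg (by positivity : (0:ℝ) ≤ 1 / T)]
      have : |(∫ s in T..(T + t), F s) - ∫ s in (0:ℝ)..t, F s| ≤ 2 * Cf * t := by
        calc |(∫ s in T..(T + t), F s) - ∫ s in (0:ℝ)..t, F s|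
            ≤ ‖∫ s in T..(T + t), F s‖ + ‖∫ s in (0:ℝ)..t, F s‖ := abs_sub _ _
          _ ≤ Cf * t + Cf * t := add_le_add b1 b2
          _ = 2 * Cf * t := by ring
      calc (1 / T) * |(∫ s in T..(T + t), F s) - ∫ s in (0:ℝ)..t, F s|
          ≤ (1 / T) * (2 * Cf * t) := by
            exact mul_le_mul_of_nonneg_left this (by positivity)
        _ = 2 * Cf * t / T := by ring
    have hlim0 : Tendsto (fun j => 2 * Cf * t / tseq (φ j)) atTop (nhds 0) :=
      Tendsto.div_atTop tendsto_const_nhds hTlim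
    exact squeeze_zero_norm hbound hlim0
  -- weak convergence gives the limit of the difference
  have hdiff2 : Tendsto (fun j => (∫ y, g y ∂ μn (φ j)) - ∫ y, f y ∂ μn (φ j))
      atTop (nhds ((∫ y, g y ∂ μ₀) - ∫ y, f y ∂ μ₀)) :=
    (hweak g hgc ⟨Cf, hgb⟩).sub (hweak f hf ⟨Cf, hCf⟩)
  have := tendsto_nhds_unique hdiff2 hdiff
  have := sub_eq_zero.mp this
  simpa [hg] using this
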